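/- arXiv:2109.05411 — 4 statements merged into one kernel-verified Lean document; each statement's English description precedes it below -/
import Mathlib

section
/- For a 3-client exchange in sequential time-sharing scheduling: let T_{i-2} ≥ 0 be the completion time after scheduling earlier clients, and let two clients with computation times t_{i-1,p} ≤ t_{i,p} and communication times t_{i-1,m}, t_{i,m} ≥ 0 be scheduled next. Define T_order = max(t_{i,p}, max(t_{i-1,p}, T_{i-2}) + t_{i-1,m}) + t_{i,m} (scheduling the faster-computing client first) and T_swap = max(t_{i-1,p}, max(t_{i,p}, T_{i-2}) + t_{i,m}) + t_{i-1,m} (swapped order). Then T_order ≤ T_swap. -/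
/-- Exchange argument for time-sharing scheduling: scheduling the
faster-computing client first yields a round time no larger than the swapped order. -/
theorem stmt_0 (T_prev t_im1_p t_i_p t_im1_m t_i_m : ℝ)
    (hT : 0 ≤ T_prev) (hp1 : 0 ≤ t_im1_p) (hp2 : t_im1_p ≤ t_i_p)
    (hm1 : 0 ≤ t_im1_m) (hm2 : 0 ≤ t_i_m) :
    max t_i_p (max t_im1_p T_prev + t_im1_m) + t_i_m ≤
      max t_im1_p (max t_i_p T_prev + t_i_m) + t_im1_m := by
  rcases le_total t_im1_p T_prev with h1 | h1 <;>
  rcases le_total t_i_p T_prev with h2 | h2 <;>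
  simp [max_def] <;> split_ifs <;> linarith
end

section
/- Sequentially scheduling K clients in nondecreasing order of their computation times minimizes the total round completion time T_K, where T_k = max(t_{σ(k),p}·E, T_{k-1}) + t_{σ(k),m} and T_0 = 0, over all permutations σ of the K clients. -/
/-- Round completion time when scheduling the `K` clients in the order given by
the permutation `σ`: `T_0 = 0`, `T_k = max (t_{σ(k),p}·E) T_{k-1} + t_{σ(k),m}`. -/
noncomputable def roundTime {K : ℕ} (tp tm : Fin K → ℝ) (E : ℝ)
    (σ : Equiv.Perm (Fin K)) : ℝ :=
  (List.finRange K).foldl (fun acc k => max (tp (σ k) * E) acc + tm (σ k)) 0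

section Aux

variable {K : ℕ} (tp tm : Fin K → ℝ) (E : ℝ)

/-- one scheduling step -/
noncomputable def schedStep (acc : ℝ) (k : Fin K) : ℝ := max (tp k * E) acc + tm k

lemma schedStep_mono {acc acc' : ℝ} (h : acc ≤ acc') (k : Fin K) :
    schedStep tp tm E acc k ≤ schedStep tp tm E acc' k := by
  unfold schedStep
  exact add_le_add_left (max_le_max le_rfl h) _

lemma foldl_schedStep_mono (l : List (Fin K)) :
    ∀ {acc acc' : ℝ}, acc ≤ acc' →
      l.foldl (schedStep tp tm E) acc ≤ l.foldl (schedStep tp tm E) acc' := by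
  induction l with
  | nil => intro acc acc' h; simpa using h
  | cons a t ih =>
      intro acc acc' h
      exact ih (schedStep_mono tp tm E h a)

lemma swap_le (htm : ∀ k, 0 ≤ tm k) (hE : 1 ≤ E) {a b : Fin K}
    (hab : tp a ≤ tp b) (acc : ℝ) :
    schedStep tp tm E (schedStep tp tm E acc a) b ≤
      schedStep tp tm E (schedStep tp tm E acc b) a := by
  have hE0 : (0:ℝ) ≤ E := le_trans zero_le_one hE
  have hAB : tp a * E ≤ tp b * E := mul_le_mul_of_nonneg_right hab hE0
  unfold schedStep
  have h1 : max (tp a * E) acc + tm a ≤ max (tp b * E) acc + tm a :=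
    add_le_add_left (max_le_max hAB le_rfl) _
  have h2 : tp b * E ≤ max (tp b * E) acc + tm a :=
    le_add_of_le_of_nonneg (le_max_left _ _) (htm a)
  have h3 : max (tp b * E) (max (tp a * E) acc + tm a) ≤ max (tp b * E) acc + tm a :=
    max_le h2 h1
  have h4 : max (tp b * E) acc + tm b ≤ max (tp a * E) (max (tp b * E) acc + tm b) :=
    le_max_right _ _
  linarith

lemma bubble_le (htm : ∀ k, 0 ≤ tm k) (hE : 1 ≤ E) (a : Fin K) :
    ∀ (u : List (Fin K)), (∀ b ∈ u, tp a ≤ tp b) → ∀ (v : List (Fin K)) (acc : ℝ),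
      (a :: (u ++ v)).foldl (schedStep tp tm E) acc ≤
        (u ++ a :: v).foldl (schedStep tp tm E) acc := by
  intro u
  induction u with
  | nil => intro _ v acc; simp
  | cons b u' ih =>
      intro hu v acc
      have hb : tp a ≤ tp b := hu b (List.mem_cons_self)
      calc (a :: (b :: u' ++ v)).foldl (schedStep tp tm E) acc
          = (u' ++ v).foldl (schedStep tp tm E)
              (schedStep tp tm E (schedStep tp tm E acc a) b) := by simp [List.foldl]
        _ ≤ (u' ++ v).foldl (schedStep tp tm E)
              (schedStep tp tm E (schedStep tp tm E acc b) a) :=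
            foldl_schedStep_mono tp tm E _ (swap_le tp tm E htm hE hb acc)
        _ = (a :: (u' ++ v)).foldl (schedStep tp tm E) (schedStep tp tm E acc b) := by
            simp [List.foldl]
        _ ≤ (u' ++ a :: v).foldl (schedStep tp tm E) (schedStep tp tm E acc b) :=
            ih (fun c hc => hu c (List.mem_cons_of_mem _ hc)) v _
        _ = ((b :: u') ++ a :: v).foldl (schedStep tp tm E) acc := by simp [List.foldl]

lemma sorted_foldl_le (htm : ∀ k, 0 ≤ tm k) (hE : 1 ≤ E) :
    ∀ (l₁ : List (Fin K)), ∀ (l₂ : List (Fin K)) (acc : ℝ), l₁.Perm l₂ →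
      l₁.Pairwise (fun x y => tp x ≤ tp y) →
      l₁.foldl (schedStep tp tm E) acc ≤ l₂.foldl (schedStep tp tm E) acc := by
  intro l₁
  induction l₁ with
  | nil =>
      intro l₂ acc hperm _
      rw [List.Perm.nil_eq hperm]
  | cons a t ih =>
      intro l₂ acc hperm hsorted
      have ha : a ∈ l₂ := hperm.mem_iff.mp (List.mem_cons_self)
      obtain ⟨u, v, rfl⟩ := List.append_of_mem ha
      have hmid : (u ++ a :: v).Perm (a :: (u ++ v)) := List.perm_middle
      have ht : t.Perm (u ++ v) := (hperm.trans hmid).cons_inv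
      have hmin : ∀ x ∈ t, tp a ≤ tp x := by
        have := List.pairwise_cons.mp hsorted
        exact this.1
      calc (a :: t).foldl (schedStep tp tm E) acc
          = t.foldl (schedStep tp tm E) (schedStep tp tm E acc a) := by simp [List.foldl]
        _ ≤ (u ++ v).foldl (schedStep tp tm E) (schedStep tp tm E acc a) :=
            ih (u ++ v) _ ht (List.pairwise_cons.mp hsorted).2
        _ = (a :: (u ++ v)).foldl (schedStep tp tm E) acc := by simp [List.foldl]
        _ ≤ (u ++ a :: v).foldl (schedStep tp tm E) acc := by
            apply bubble_le tp tm E htm hE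
            intro b hb
            exact hmin b (ht.mem_iff.mpr (List.mem_append_left v hb))

end Aux

/-- Sequentially scheduling clients in nondecreasing order of computation time
minimizes the round completion time over all permutations. -/
theorem stmt_1 {K : ℕ} (tp tm : Fin K → ℝ) (E : ℝ)
    (htp : ∀ k, 0 ≤ tp k) (htm : ∀ k, 0 ≤ tm k) (hE : 1 ≤ E)
    (σ : Equiv.Perm (Fin K)) (hσ : Monotone (fun k => tp (σ k))) :
    ∀ τ : Equiv.Perm (Fin K), roundTime tp tm E σ ≤ roundTime tp tm E τ := by
  intro τ
  have key : ∀ ρ : Equiv.Perm (Fin K),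
      roundTime tp tm E ρ =
        ((List.finRange K).map ρ).foldl (schedStep tp tm E) 0 := by
    intro ρ
    rw [roundTime, List.foldl_map]
    rfl
  rw [key σ, key τ]
  apply sorted_foldl_le tp tm E htm hE
  · -- perm
    rw [List.perm_ext_iff_of_nodup
      ((List.nodup_finRange K).map σ.injective)
      ((List.nodup_finRange K).map τ.injective)]
    intro a
    simp only [List.mem_map, List.mem_finRange, true_and]
    exact ⟨fun _ => ⟨τ.symm a, τ.apply_symm_apply a⟩, fun _ => ⟨σ.symm a, σ.apply_symm_apply a⟩⟩
  · -- sorted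
    rw [List.pairwise_map]
    exact (List.pairwise_lt_finRange K).imp (fun h => hσ (le_of_lt h))
end

section
/- The function f(K, E) = (γK(e_pE + e_m) + (1−γ)(t_pE + t_mK))·(A_0 + B_0(1 + (N−K)/(K(N−1)))E²)/E on the domain [1, N] × [1, ∞) is biconvex: for each fixed E it is convex in K, and for each fixed K it is convex in E, given A_0, B_0, t_p, t_m, e_p, e_m > 0, γ ∈ [0,1], N ≥ 2. -/
set_option maxHeartbeats 1000000

lemma aux_cvx (u p q r : ℝ) (hu : 0 ≤ u) (hp : 0 ≤ p) (hq : 0 ≤ q) :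
    ConvexOn ℝ (Set.Ioi (0:ℝ)) (fun x => u * x ^ 2 + p * x + q / x + r) := by
  have h1 : ConvexOn ℝ (Set.Ioi (0:ℝ)) (fun x : ℝ => u * x ^ 2) := by
    simpa [smul_eq_mul] using
      (((convexOn_pow 2).subset Set.Ioi_subset_Ici_self (convex_Ioi 0)).smul hu)
  have h2 : ConvexOn ℝ (Set.Ioi (0:ℝ)) (fun x : ℝ => p * x) := by
    simpa [smul_eq_mul] using ((convexOn_id (convex_Ioi (0:ℝ))).smul hp)
  have h3 : ConvexOn ℝ (Set.Ioi (0:ℝ)) (fun x : ℝ => q / x) := by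
    have := (convexOn_zpow (𝕜 := ℝ) (-1)).smul hq
    simpa [smul_eq_mul, zpow_neg, div_eq_mul_inv] using this
  have h4 : ConvexOn ℝ (Set.Ioi (0:ℝ)) (fun _ : ℝ => r) := convexOn_const r (convex_Ioi 0)
  exact ((h1.add h2).add h3).add h4

/-- The approximate total cost `f(K, E)` is biconvex on `[1, N] × [1, ∞)`:
convex in `K` for each fixed `E`, and convex in `E` for each fixed `K`. -/
theorem stmt_10 (N : ℕ) (hN : 2 ≤ N)
    (A0 B0 tp tm ep em γ : ℝ)
    (hA0 : 0 < A0) (hB0 : 0 < B0) (htp : 0 < tp) (htm : 0 < tm)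
    (hep : 0 < ep) (hem : 0 < em)
    (hγ0 : 0 ≤ γ) (hγ1 : γ ≤ 1)
    (f : ℝ → ℝ → ℝ)
    (hf : ∀ K E, f K E = (γ * K * (ep * E + em) + (1 - γ) * (tp * E + tm * K)) *
        (A0 + B0 * (1 + ((N : ℝ) - K) / (K * ((N : ℝ) - 1))) * E ^ 2) / E) :
    (∀ E ∈ Set.Ici (1 : ℝ), ConvexOn ℝ (Set.Icc (1 : ℝ) (N : ℝ)) (fun K => f K E)) ∧
    (∀ K ∈ Set.Icc (1 : ℝ) (N : ℝ), ConvexOn ℝ (Set.Ici (1 : ℝ)) (fun E => f K E)) := by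
  have hN2 : (2 : ℝ) ≤ (N : ℝ) := by exact_mod_cast hN
  have hN1 : (0 : ℝ) < (N : ℝ) - 1 := by linarith
  have hγ1' : 0 ≤ 1 - γ := by linarith
  constructor
  · intro E hE
    have hE0 : (0 : ℝ) < E := lt_of_lt_of_le one_pos hE
    set a : ℝ := γ * (ep * E + em) + (1 - γ) * tm with ha
    set b : ℝ := (1 - γ) * tp * E with hb
    set c : ℝ := A0 + B0 * E ^ 2 * (((N : ℝ) - 2) / ((N : ℝ) - 1)) with hc
    set d : ℝ := B0 * E ^ 2 * ((N : ℝ) / ((N : ℝ) - 1)) with hd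
    have haa : 0 ≤ a := by
      have : 0 ≤ ep * E + em := by positivity
      nlinarith
    have hbb : 0 ≤ b := by positivity
    have hcc : 0 ≤ c := by
      have h1 : 0 ≤ ((N : ℝ) - 2) / ((N : ℝ) - 1) := by
        apply div_nonneg <;> linarith
      have h2 := mul_nonneg (mul_nonneg hB0.le (sq_nonneg E)) h1
      rw [hc]; nlinarith
    have hdd : 0 ≤ d := by
      have h1 : 0 ≤ (N : ℝ) / ((N : ℝ) - 1) := by positivity
      have h2 := mul_nonneg (mul_nonneg hB0.le (sq_nonneg E)) h1
      rw [hd]; linarith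
    have hcvx := aux_cvx 0 (a * c / E) (b * d / E) ((a * d + b * c) / E)
      le_rfl (by positivity) (by positivity)
    have hsub : Set.Icc (1 : ℝ) (N : ℝ) ⊆ Set.Ioi (0 : ℝ) := fun x hx => by
      simp only [Set.mem_Ioi]; linarith [hx.1]
    refine (hcvx.subset hsub (convex_Icc _ _)).congr ?_
    intro K hK
    have hK0 : (0 : ℝ) < K := lt_of_lt_of_le one_pos hK.1
    have hKne : K ≠ 0 := ne_of_gt hK0
    have hEne : E ≠ 0 := ne_of_gt hE0
    have hNne : (N : ℝ) - 1 ≠ 0 := ne_of_gt hN1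
    simp only [hf]
    rw [ha, hb, hc, hd]
    field_simp
    ring
  · intro K hK
    have hK0 : (0 : ℝ) < K := lt_of_lt_of_le one_pos hK.1
    set α : ℝ := γ * K * ep + (1 - γ) * tp with hα
    set β : ℝ := K * (γ * em + (1 - γ) * tm) with hβ
    set D : ℝ := B0 * (1 + ((N : ℝ) - K) / (K * ((N : ℝ) - 1))) with hD
    have hαα : 0 ≤ α := by
      have : 0 ≤ γ * K * ep := by positivity
      nlinarith
    have hββ : 0 ≤ β := by
      have : 0 ≤ γ * em + (1 - γ) * tm := by nlinarith
      positivity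
    have hDD : 0 ≤ D := by
      have : 0 ≤ ((N : ℝ) - K) / (K * ((N : ℝ) - 1)) := by
        apply div_nonneg
        · linarith [hK.2]
        · positivity
      nlinarith
    have hcvx := aux_cvx (α * D) (β * D) (β * A0) (α * A0)
      (by positivity) (by positivity) (by positivity)
    have hsub : Set.Ici (1 : ℝ) ⊆ Set.Ioi (0 : ℝ) := fun x hx => by
      simp only [Set.mem_Ioi]; linarith [Set.mem_Ici.mp hx]
    refine (hcvx.subset hsub (convex_Ici _)).congr ?_
    intro E hE
    have hE0 : (0 : ℝ) < E := lt_of_lt_of_le one_pos (Set.mem_Ici.mp hE)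
    have hKne : K ≠ 0 := ne_of_gt hK0
    have hEne : E ≠ 0 := ne_of_gt hE0
    have hNne : (N : ℝ) - 1 ≠ 0 := ne_of_gt hN1
    simp only [hf]
    rw [hα, hβ, hD]
    field_simp
    ring
end

section
/- The critical point E* of C(E), characterized by the equation [(1−γ)(2t_pE³ + t_mKE²) + γK(2e_pE³ + e_mE²)]/(K[(1−γ)t_m + γe_m]) = A_0/(B_0(1 + (N−K)/(K(N−1)))), is strictly decreasing in t_p when 0 ≤ γ < 1 and strictly decreasing in e_p when 0 < γ ≤ 1 (i.e., E* increases as t_p or e_p decreases). -/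
/-- The critical point `E*` characterized by the first-order condition is
strictly decreasing in `t_p` (when `γ < 1`) and strictly decreasing in `e_p`
(when `γ > 0`), i.e. `E*` increases as `t_p` or `e_p` decreases. -/
theorem stmt_15 (N : ℕ) (hN : 2 ≤ N)
    (A0 B0 tm em K γ : ℝ)
    (hA0 : 0 < A0) (hB0 : 0 < B0) (htm : 0 < tm) (hem : 0 < em)
    (hK1 : 1 ≤ K) (hKN : K ≤ (N : ℝ))
    (hγ0 : 0 ≤ γ) (hγ1 : γ ≤ 1)
    (Estar : ℝ → ℝ → ℝ)
    (hEpos : ∀ tp ep : ℝ, 0 < tp → 0 < ep → 0 < Estar tp ep)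
    (hcrit : ∀ tp ep : ℝ, 0 < tp → 0 < ep →
        ((1 - γ) * (2 * tp * (Estar tp ep) ^ 3 + tm * K * (Estar tp ep) ^ 2)
            + γ * K * (2 * ep * (Estar tp ep) ^ 3 + em * (Estar tp ep) ^ 2))
          / (K * ((1 - γ) * tm + γ * em))
          = A0 / (B0 * (1 + ((N : ℝ) - K) / (K * ((N : ℝ) - 1))))) :
    (γ < 1 → ∀ tp tp' ep : ℝ, 0 < tp → 0 < tp' → 0 < ep →
        tp < tp' → Estar tp' ep < Estar tp ep) ∧
    (0 < γ → ∀ tp ep ep' : ℝ, 0 < tp → 0 < ep → 0 < ep' →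
        ep < ep' → Estar tp ep' < Estar tp ep) := by
  have hK : (0:ℝ) < K := lt_of_lt_of_le one_pos hK1
  have hconv : 0 < (1 - γ) * tm + γ * em := by
    rcases lt_or_ge 0 γ with h | h
    · nlinarith [mul_pos h hem, mul_nonneg (sub_nonneg.mpr hγ1) htm.le]
    · have hγ : γ = 0 := le_antisymm h hγ0
      subst hγ; simpa using htm
  have hD : K * ((1 - γ) * tm + γ * em) ≠ 0 := (mul_pos hK hconv).ne'
  constructor
  · intro hγlt tp tp' ep htp htp' hep hlt
    by_contra hcon
    push_neg at hcon
    have hE := hEpos tp ep htp hep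
    have hE' := hEpos tp' ep htp' hep
    have heq := (hcrit tp ep htp hep).trans (hcrit tp' ep htp' hep).symm
    rw [div_eq_div_iff hD hD] at heq
    have hF := mul_right_cancel₀ hD heq
    have hE3 : Estar tp ep ^ 3 ≤ Estar tp' ep ^ 3 := pow_le_pow_left₀ hE.le hcon 3
    have hE2 : Estar tp ep ^ 2 ≤ Estar tp' ep ^ 2 := pow_le_pow_left₀ hE.le hcon 2
    nlinarith [mul_pos (sub_pos.mpr hlt) (pow_pos hE 3),
      mul_pos (sub_pos.mpr hγlt) (mul_pos (sub_pos.mpr hlt) (pow_pos hE 3)),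
      mul_nonneg (mul_nonneg hγ0 hK.le) (mul_nonneg hep.le (sub_nonneg.mpr hE3)),
      mul_nonneg (mul_nonneg hγ0 hK.le) (mul_nonneg hem.le (sub_nonneg.mpr hE2)),
      mul_nonneg (mul_nonneg (sub_nonneg.mpr hγ1) (mul_nonneg htm.le hK.le)) (sub_nonneg.mpr hE2),
      mul_nonneg (mul_nonneg (sub_nonneg.mpr hγ1) htp'.le) (sub_nonneg.mpr hE3)]
  · intro hγpos tp ep ep' htp hep hep' hlt
    by_contra hcon
    push_neg at hcon
    have hE := hEpos tp ep htp hep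
    have hE' := hEpos tp ep' htp hep'
    have heq := (hcrit tp ep htp hep).trans (hcrit tp ep' htp hep').symm
    rw [div_eq_div_iff hD hD] at heq
    have hF := mul_right_cancel₀ hD heq
    have hE3 : Estar tp ep ^ 3 ≤ Estar tp ep' ^ 3 := pow_le_pow_left₀ hE.le hcon 3
    have hE2 : Estar tp ep ^ 2 ≤ Estar tp ep' ^ 2 := pow_le_pow_left₀ hE.le hcon 2
    nlinarith [mul_pos (mul_pos hγpos hK) (mul_pos (sub_pos.mpr hlt) (pow_pos hE 3)),
      mul_nonneg (mul_nonneg hγ0 hK.le) (mul_nonneg hem.le (sub_nonneg.mpr hE2)),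
      mul_nonneg (mul_nonneg hγ0 hK.le) (mul_nonneg hep'.le (sub_nonneg.mpr hE3)),
      mul_nonneg (mul_nonneg (sub_nonneg.mpr hγ1) (mul_nonneg htm.le hK.le)) (sub_nonneg.mpr hE2),
      mul_nonneg (mul_nonneg (sub_nonneg.mpr hγ1) (mul_nonneg (by norm_num : (0:ℝ) ≤ 2) htp.le)) (sub_nonneg.mpr hE3)]
end
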